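/- (Bézivin) Let f : ℕ≥1 → ℂ be a multiplicative function satisfying a polynomial recurrence ∑_{i=0}^t P_i(n)·f(n+i) = 0 for all n ≥ 1, where P_0, …, P_t ∈ ℂ[x] and P_t ≠ 0. Set N = (2t+1)!. Then for every positive integer q coprime to N, there exists n₀ such that f(nq) = f(n)·f(q) for all n ≥ n₀. -/

import Mathlib

open Filter Polynomial

noncomputable section BezivinAux

abbrev BG : Type := Filter.Germ (Filter.atTop : Filter ℕ) ℂ

/-- Evaluation of polynomials along `ℕ`, as a germ at infinity. -/
def bphi : Polynomial ℂ →+* BG :=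
  (Filter.Germ.coeRingHom _).comp (Pi.ringHom fun n : ℕ => Polynomial.evalRingHom (n : ℂ))

lemma bphi_apply (p : Polynomial ℂ) : bphi p = ((fun n : ℕ => p.eval (n : ℂ)) : ℕ → ℂ) := rfl

lemma bcongr {F G : ℕ → ℂ} (h : ∀ n, F n = G n) : ((F : ℕ → ℂ) : BG) = ((G : ℕ → ℂ) : BG) :=
  congrArg _ (funext h)

lemma eval_eventually_ne {p : Polynomial ℂ} (hp : p ≠ 0) :
    ∀ᶠ n : ℕ in atTop, p.eval (n : ℂ) ≠ 0 := by
  have h1 : {x : ℂ | p.IsRoot x}.Finite := p.finite_setOf_isRoot hp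
  have h2 : {n : ℕ | p.eval (n : ℂ) = 0}.Finite := by
    have : {n : ℕ | p.eval (n : ℂ) = 0} = (fun n : ℕ => (n : ℂ)) ⁻¹' {x : ℂ | p.IsRoot x} := rfl
    rw [this]
    exact h1.preimage (Function.Injective.injOn Nat.cast_injective)
  have := h2.eventually_cofinite_notMem
  rwa [Nat.cofinite_eq_atTop] at this

lemma bphi_isUnit {p : Polynomial ℂ} (hp : p ≠ 0) : IsUnit (bphi p) := by
  refine IsUnit.of_mul_eq_one ((fun n : ℕ => (p.eval (n : ℂ))⁻¹ : ℕ → ℂ) : BG) ?_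
  rw [bphi_apply]
  change ((fun n : ℕ => p.eval (n:ℂ)) * (fun n : ℕ => (p.eval (n:ℂ))⁻¹) : ℕ → ℂ) = ((1 : ℕ → ℂ) : BG)
  rw [Filter.Germ.coe_eq]
  filter_upwards [eval_eventually_ne hp] with n hn
  simp [mul_inv_cancel₀ hn]

/-- Evaluation of rational functions along `ℕ`, as a germ at infinity. -/
def bpsi : RatFunc ℂ →+* BG :=
  IsLocalization.lift (M := nonZeroDivisors (Polynomial ℂ)) (g := bphi)
    (fun y => bphi_isUnit (nonZeroDivisors.ne_zero y.prop))

lemma bpsi_algebraMap (p : Polynomial ℂ) :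
    bpsi (algebraMap (Polynomial ℂ) (RatFunc ℂ) p) = bphi p :=
  IsLocalization.lift_eq _ p

instance bmod : Module (RatFunc ℂ) BG := Module.compHom _ bpsi

lemma bsmul_def (c : RatFunc ℂ) (v : BG) : c • v = bpsi c * v := rfl

lemma comp_X_add_C_ne_zero {p : Polynomial ℂ} (hp : p ≠ 0) (a : ℂ) : p.comp (X + C a) ≠ 0 := by
  intro h
  have h2 : (p.comp (X + C a)).comp (X - C a) = p := by
    rw [Polynomial.comp_assoc]; simp
  rw [h, Polynomial.zero_comp] at h2
  exact hp h2.symm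

lemma comp_X_mul_C_ne_zero {p : Polynomial ℂ} (hp : p ≠ 0) {a : ℂ} (ha : a ≠ 0) :
    p.comp (X * C a) ≠ 0 := by
  intro h
  have h2 : (p.comp (X * C a)).comp (X * C a⁻¹) = p := by
    rw [Polynomial.comp_assoc]
    have h3 : (X * C a).comp (X * C a⁻¹) = (X : Polynomial ℂ) := by
      rw [Polynomial.mul_comp, Polynomial.X_comp, Polynomial.C_comp]
      have h4 : X * C a⁻¹ * C a = (C a⁻¹ * C a) * X := by ring
      rw [h4, ← Polynomial.C_mul, inv_mul_cancel₀ ha, Polynomial.C_1, one_mul]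
    rw [h3, Polynomial.comp_X]
  rw [h, Polynomial.zero_comp] at h2
  exact hp h2.symm

lemma bez_memA (f : ℕ → ℂ) (t : ℕ) (P : ℕ → Polynomial ℂ) (hPt : P t ≠ 0)
    (hrec : ∀ n : ℕ, 1 ≤ n →
      ∑ i ∈ Finset.range (t + 1), (P i).eval (n : ℂ) * f (n + i) = 0)
    (k : ℕ) :
    ((fun n : ℕ => f (n + k) : ℕ → ℂ) : BG) ∈ Submodule.span (RatFunc ℂ)
      (Set.range fun i : Fin t => ((fun n : ℕ => f (n + (i : ℕ)) : ℕ → ℂ) : BG)) := by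
  induction k using Nat.strong_induction_on with
  | _ k ih =>
  by_cases hk : k < t
  · exact Submodule.subset_span ⟨⟨k, hk⟩, rfl⟩
  · push_neg at hk
    set a := k - t with ha
    have E : ∑ i ∈ Finset.range (t+1), bphi ((P i).comp (X + C (a:ℂ))) *
        ((fun n : ℕ => f (n + a + i) : ℕ → ℂ) : BG) = 0 := by
      have e1 : ∀ i, bphi ((P i).comp (X + C (a:ℂ))) *
          ((fun n : ℕ => f (n + a + i) : ℕ → ℂ) : BG)
          = ((fun n : ℕ => (P i).eval ((n + a : ℕ) : ℂ) * f (n + a + i) : ℕ → ℂ) : BG) := by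
        intro i
        rw [bphi_apply, ← Filter.Germ.coe_mul]
        congr 1
        funext n
        simp only [Pi.mul_apply, Polynomial.eval_comp, Polynomial.eval_add, Polynomial.eval_X,
          Polynomial.eval_C]
        push_cast
        ring
      rw [Finset.sum_congr rfl (fun i _ => e1 i)]
      have hsum : ∑ i ∈ Finset.range (t+1),
          (((fun n : ℕ => (P i).eval ((n + a : ℕ) : ℂ) * f (n + a + i)) : ℕ → ℂ) : BG)
          = (((∑ i ∈ Finset.range (t+1),
              fun n : ℕ => (P i).eval ((n + a : ℕ) : ℂ) * f (n + a + i)) : ℕ → ℂ) : BG) :=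
        (map_sum (Filter.Germ.coeRingHom (l := (atTop : Filter ℕ)))
          (fun i => ((fun n : ℕ => (P i).eval ((n + a : ℕ) : ℂ) * f (n + a + i)) : ℕ → ℂ))
          (Finset.range (t+1))).symm
      rw [hsum]
      rw [← Filter.Germ.coe_zero (l := (atTop : Filter ℕ)), Filter.Germ.coe_eq]
      filter_upwards [eventually_ge_atTop 1] with n hn
      rw [Finset.sum_apply]
      have := hrec (n + a) (by omega)
      simpa using this
    rw [Finset.sum_range_succ] at E
    have hvt : ((fun n : ℕ => f (n + a + t) : ℕ → ℂ) : BG)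
        = ((fun n : ℕ => f (n + k) : ℕ → ℂ) : BG) := bcongr (fun n => by congr 1; omega)
    rw [hvt] at E
    have hPt' : (P t).comp (X + C (a:ℂ)) ≠ 0 := comp_X_add_C_ne_zero hPt _
    have halg : algebraMap (Polynomial ℂ) (RatFunc ℂ) ((P t).comp (X + C (a:ℂ))) ≠ 0 :=
      RatFunc.algebraMap_ne_zero hPt'
    have hv : ((fun n : ℕ => f (n + k) : ℕ → ℂ) : BG)
        = (algebraMap (Polynomial ℂ) (RatFunc ℂ) ((P t).comp (X + C (a:ℂ))))⁻¹ •
          (bphi ((P t).comp (X + C (a:ℂ))) * ((fun n : ℕ => f (n + k) : ℕ → ℂ) : BG)) := by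
      rw [bsmul_def, ← bpsi_algebraMap ((P t).comp (X + C (a:ℂ))), ← mul_assoc,
        ← map_mul, inv_mul_cancel₀ halg, map_one, one_mul]
    rw [hv]
    have hE2 : bphi ((P t).comp (X + C (a:ℂ))) * ((fun n : ℕ => f (n + k) : ℕ → ℂ) : BG)
        = - ∑ i ∈ Finset.range t, bphi ((P i).comp (X + C (a:ℂ))) *
            ((fun n : ℕ => f (n + a + i) : ℕ → ℂ) : BG) :=
      eq_neg_of_add_eq_zero_right E
    rw [hE2]
    apply Submodule.smul_mem
    apply Submodule.neg_mem
    apply Submodule.sum_mem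
    intro i hi
    rw [Finset.mem_range] at hi
    have e2 : bphi ((P i).comp (X + C (a:ℂ))) * ((fun n : ℕ => f (n + a + i) : ℕ → ℂ) : BG)
        = (algebraMap (Polynomial ℂ) (RatFunc ℂ) ((P i).comp (X + C (a:ℂ)))) •
          ((fun n : ℕ => f (n + (a + i)) : ℕ → ℂ) : BG) := by
      rw [bsmul_def, bpsi_algebraMap]
      exact congrArg _ (bcongr (fun n => by congr 1; omega))
    rw [e2]
    exact Submodule.smul_mem _ _ (ih (a + i) (by omega))

/-- Compression of a germ along `n ↦ n * q`. -/
def bth (q : ℕ) (hq : 0 < q) : BG →+* BG where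
  toFun u := u.compTendsto (fun n : ℕ => n * q)
    (tendsto_atTop_mono (fun n => Nat.le_mul_of_pos_right n hq) tendsto_id)
  map_one' := rfl
  map_mul' u v := Filter.Germ.inductionOn₂ u v fun _ _ => rfl
  map_zero' := rfl
  map_add' u v := Filter.Germ.inductionOn₂ u v fun _ _ => rfl

lemma bth_coe (q : ℕ) (hq : 0 < q) (F : ℕ → ℂ) :
    bth q hq ((F : ℕ → ℂ) : BG) = ((fun n : ℕ => F (n * q)) : ℕ → ℂ) := rfl

lemma bth_bphi (q : ℕ) (hq : 0 < q) (p : Polynomial ℂ) :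
    bth q hq (bphi p) = bphi (p.comp (X * C (q:ℂ))) := by
  rw [bphi_apply, bphi_apply, bth_coe]
  exact bcongr fun n => by
    simp only [Polynomial.eval_comp, Polynomial.eval_mul, Polynomial.eval_X, Polynomial.eval_C]
    push_cast
    ring

lemma ratfunc_mul_denom (c : RatFunc ℂ) :
    c * algebraMap (Polynomial ℂ) (RatFunc ℂ) c.denom
      = algebraMap (Polynomial ℂ) (RatFunc ℂ) c.num := by
  nth_rewrite 1 [← RatFunc.num_div_denom c]
  rw [div_mul_cancel₀ _ (RatFunc.algebraMap_ne_zero (RatFunc.denom_ne_zero c))]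

lemma bth_bpsi (q : ℕ) (hq : 0 < q) (c : RatFunc ℂ) :
    ∃ c' : RatFunc ℂ, bth q hq (bpsi c) = bpsi c' := by
  have hq0 : (q : ℂ) ≠ 0 := Nat.cast_ne_zero.mpr hq.ne'
  set N := c.num.comp (X * C (q:ℂ)) with hN
  set D := c.denom.comp (X * C (q:ℂ)) with hD
  have hDne : D ≠ 0 := comp_X_mul_C_ne_zero (RatFunc.denom_ne_zero c) hq0
  have hDalg : algebraMap (Polynomial ℂ) (RatFunc ℂ) D ≠ 0 := RatFunc.algebraMap_ne_zero hDne
  refine ⟨algebraMap _ _ N * (algebraMap _ _ D)⁻¹, ?_⟩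
  refine (bphi_isUnit hDne).mul_right_cancel ?_
  have l1 : bth q hq (bpsi c) * bphi D = bphi N := by
    rw [← bth_bphi q hq c.denom, ← map_mul (bth q hq), ← bpsi_algebraMap c.denom,
      ← map_mul bpsi, ratfunc_mul_denom, bpsi_algebraMap, bth_bphi]
  have l2 : bpsi (algebraMap (Polynomial ℂ) (RatFunc ℂ) N
      * (algebraMap (Polynomial ℂ) (RatFunc ℂ) D)⁻¹) * bphi D = bphi N := by
    rw [← bpsi_algebraMap D, ← map_mul, mul_assoc, inv_mul_cancel₀ hDalg, mul_one,
      bpsi_algebraMap]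
  rw [l1, l2]

lemma bth_span (q : ℕ) (hq : 0 < q) {s : Set BG} {v : BG}
    (hv : v ∈ Submodule.span (RatFunc ℂ) s) :
    bth q hq v ∈ Submodule.span (RatFunc ℂ) ((fun x => bth q hq x) '' s) := by
  induction hv using Submodule.span_induction with
  | mem x hx => exact Submodule.subset_span ⟨x, hx, rfl⟩
  | zero => rw [map_zero]; exact Submodule.zero_mem _
  | add x y hx hy ihx ihy => rw [map_add]; exact Submodule.add_mem _ ihx ihy
  | smul c x hx ihx =>
      obtain ⟨c', hc'⟩ := bth_bpsi q hq c
      rw [bsmul_def, map_mul, hc', ← bsmul_def]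
      exact Submodule.smul_mem _ _ ihx

end BezivinAux
/-- Bézivin: Let `f : ℕ≥1 → ℂ` be multiplicative satisfying
`∑_{i=0}^t P_i(n) f(n+i) = 0` for all `n ≥ 1` with `P_t ≠ 0`, and set `N = (2t+1)!`.
Then for every `q ≥ 1` coprime to `N` there is `n₀` with `f(nq) = f(n) f(q)` for all
`n ≥ n₀`. -/
theorem bezivin_eventual_multiplicativity
    (f : ℕ → ℂ)
    (hf1 : f 1 = 1)
    (hfmul : ∀ m n : ℕ, 0 < m → 0 < n → Nat.Coprime m n → f (m * n) = f m * f n)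
    (t : ℕ) (P : ℕ → Polynomial ℂ) (hPt : P t ≠ 0)
    (hrec : ∀ n : ℕ, 1 ≤ n →
      ∑ i ∈ Finset.range (t + 1), (P i).eval (n : ℂ) * f (n + i) = 0) :
    ∀ q : ℕ, 1 ≤ q → Nat.Coprime q (Nat.factorial (2 * t + 1)) →
      ∃ n₀ : ℕ, ∀ n : ℕ, n₀ ≤ n → f (n * q) = f n * f q := by
  classical
  intro q hq hcop
  have hq0 : 0 < q := hq
  set gfun : Fin t → BG := fun i => ((fun n : ℕ => f (n + (i : ℕ)) : ℕ → ℂ) : BG) with hgfun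
  set T : Finset BG :=
    Finset.image gfun Finset.univ ∪ Finset.image (fun i => bth q hq0 (gfun i)) Finset.univ
    with hT
  have hTcard : T.card ≤ 2 * t := by
    refine le_trans (Finset.card_union_le _ _) ?_
    have h1 := Finset.card_image_le (f := gfun) (s := Finset.univ)
    have h2 := Finset.card_image_le (f := fun i => bth q hq0 (gfun i)) (s := Finset.univ)
    simp only [Finset.card_univ, Fintype.card_fin] at h1 h2
    omega
  set H : ℕ → ℂ := fun m => f (m * q) - f q * f m with hH
  have hmem : ∀ j : ℕ, ((fun n : ℕ => H (n + j) : ℕ → ℂ) : BG) ∈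
      Submodule.span (RatFunc ℂ) (T : Set BG) := by
    intro j
    have h1 : ((fun n : ℕ => f ((n + j) * q) : ℕ → ℂ) : BG) ∈
        Submodule.span (RatFunc ℂ) (T : Set BG) := by
      have e : bth q hq0 ((fun n : ℕ => f (n + j * q) : ℕ → ℂ) : BG)
          = ((fun n : ℕ => f ((n + j) * q) : ℕ → ℂ) : BG) := by
        rw [bth_coe]
        exact bcongr fun n => by congr 1; ring
      have m1 := bth_span q hq0 (bez_memA f t P hPt hrec (j * q))
      rw [e] at m1
      refine Submodule.span_mono ?_ m1
      rintro x ⟨y, ⟨i, rfl⟩, rfl⟩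
      exact Finset.mem_coe.mpr (Finset.mem_union_right _
        (Finset.mem_image.mpr ⟨i, Finset.mem_univ i, rfl⟩))
    have h2 : ((fun n : ℕ => f q * f (n + j) : ℕ → ℂ) : BG) ∈
        Submodule.span (RatFunc ℂ) (T : Set BG) := by
      have e2 : ((fun n : ℕ => f q * f (n + j) : ℕ → ℂ) : BG)
          = (algebraMap (Polynomial ℂ) (RatFunc ℂ) (C (f q))) •
            ((fun n : ℕ => f (n + j) : ℕ → ℂ) : BG) := by
        rw [bsmul_def, bpsi_algebraMap, bphi_apply, ← Filter.Germ.coe_mul]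
        exact bcongr fun n => by simp
      rw [e2]
      refine Submodule.smul_mem _ _ ?_
      have m2 := bez_memA f t P hPt hrec j
      refine Submodule.span_mono ?_ m2
      rintro x ⟨i, rfl⟩
      exact Finset.mem_coe.mpr (Finset.mem_union_left _
        (Finset.mem_image.mpr ⟨i, Finset.mem_univ i, rfl⟩))
    have e3 : ((fun n : ℕ => H (n + j) : ℕ → ℂ) : BG)
        = ((fun n : ℕ => f ((n + j) * q) : ℕ → ℂ) : BG)
          - ((fun n : ℕ => f q * f (n + j) : ℕ → ℂ) : BG) := by
      rw [← Filter.Germ.coe_sub]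
      exact bcongr fun n => rfl
    rw [e3]
    exact Submodule.sub_mem _ h1 h2
  set b : Fin (2 * t + 1) → (Submodule.span (RatFunc ℂ) (T : Set BG)) :=
    fun j => ⟨((fun n : ℕ => H (n + (j : ℕ)) : ℕ → ℂ) : BG), hmem (j : ℕ)⟩ with hb
  have hnli : ¬ LinearIndependent (RatFunc ℂ) b := by
    intro hli
    have hc1 := hli.fintype_card_le_finrank
    rw [Fintype.card_fin] at hc1
    have hc2 : Module.finrank (RatFunc ℂ) (Submodule.span (RatFunc ℂ) (T : Set BG)) ≤ T.card :=
      finrank_span_finset_le_card T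
    omega
  rw [Fintype.not_linearIndependent_iff] at hnli
  obtain ⟨g, hgsum, j₀, hj₀⟩ := hnli
  have hgsum' : ∑ j : Fin (2 * t + 1),
      g j • ((fun n : ℕ => H (n + (j : ℕ)) : ℕ → ℂ) : BG) = 0 := by
    have hc := congrArg ((Submodule.span (RatFunc ℂ) (T : Set BG)).subtype) hgsum
    rw [map_sum, map_zero] at hc
    simpa only [map_smul, Submodule.subtype_apply, hb] using hc
  set Qp : Fin (2 * t + 1) → Polynomial ℂ :=
    fun j => (g j).num * ∏ k ∈ Finset.univ.erase j, (g k).denom with hQp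
  set Dp : Polynomial ℂ := ∏ k, (g k).denom with hDp
  have halgQ : ∀ j, algebraMap (Polynomial ℂ) (RatFunc ℂ) (Qp j)
      = algebraMap (Polynomial ℂ) (RatFunc ℂ) Dp * g j := by
    intro j
    rw [hQp, hDp, map_mul, map_prod, map_prod]
    rw [← Finset.mul_prod_erase _ _ (Finset.mem_univ j)]
    rw [mul_comm ((algebraMap (Polynomial ℂ) (RatFunc ℂ)) ((g j).denom)) _, mul_assoc]
    rw [mul_comm ((algebraMap (Polynomial ℂ) (RatFunc ℂ)) ((g j).denom)) (g j)]
    rw [ratfunc_mul_denom, mul_comm]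
  have hQrel : ∑ j : Fin (2 * t + 1),
      bphi (Qp j) * ((fun n : ℕ => H (n + (j : ℕ)) : ℕ → ℂ) : BG) = 0 := by
    have e4 : ∀ j : Fin (2 * t + 1),
        bphi (Qp j) * ((fun n : ℕ => H (n + (j : ℕ)) : ℕ → ℂ) : BG)
        = bphi Dp * (g j • ((fun n : ℕ => H (n + (j : ℕ)) : ℕ → ℂ) : BG)) := by
      intro j
      rw [bsmul_def, ← mul_assoc, ← bpsi_algebraMap Dp, ← map_mul, ← halgQ j, bpsi_algebraMap]
    rw [Finset.sum_congr rfl (fun j _ => e4 j), ← Finset.mul_sum, hgsum', mul_zero]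
  have hQ0 : Qp j₀ ≠ 0 := by
    rw [hQp]
    exact mul_ne_zero (RatFunc.num_ne_zero hj₀)
      (Finset.prod_ne_zero_iff.mpr fun k _ => RatFunc.denom_ne_zero _)
  have hpoint : ∀ᶠ n : ℕ in atTop,
      ∑ j : Fin (2 * t + 1), (Qp j).eval (n : ℂ) * H (n + (j : ℕ)) = 0 := by
    have e5 : ∀ j : Fin (2 * t + 1),
        bphi (Qp j) * ((fun n : ℕ => H (n + (j : ℕ)) : ℕ → ℂ) : BG)
        = (((fun n : ℕ => (Qp j).eval (n : ℂ) * H (n + (j : ℕ))) : ℕ → ℂ) : BG) := by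
      intro j
      rw [bphi_apply, ← Filter.Germ.coe_mul]
      exact bcongr fun n => rfl
    rw [Finset.sum_congr rfl (fun j _ => e5 j)] at hQrel
    have hsum2 : ∑ j : Fin (2 * t + 1),
        (((fun n : ℕ => (Qp j).eval (n : ℂ) * H (n + (j : ℕ))) : ℕ → ℂ) : BG)
        = (((∑ j : Fin (2 * t + 1),
            fun n : ℕ => (Qp j).eval (n : ℂ) * H (n + (j : ℕ))) : ℕ → ℂ) : BG) :=
      (map_sum (Filter.Germ.coeRingHom (l := (atTop : Filter ℕ)))
        (fun j : Fin (2 * t + 1) =>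
          ((fun n : ℕ => (Qp j).eval (n : ℂ) * H (n + (j : ℕ))) : ℕ → ℂ))
        Finset.univ).symm
    rw [hsum2, ← Filter.Germ.coe_zero (l := (atTop : Filter ℕ)), Filter.Germ.coe_eq] at hQrel
    filter_upwards [hQrel] with n hn
    simpa [Finset.sum_apply] using hn
  obtain ⟨n₁, hn₁⟩ := eventually_atTop.mp hpoint
  obtain ⟨d, hdmem, hdmax⟩ : ∃ d : Fin (2 * t + 1), Qp d ≠ 0 ∧
      ∀ j : Fin (2 * t + 1), Qp j ≠ 0 → j ≤ d := by
    have hne : (Finset.univ.filter (fun j : Fin (2 * t + 1) => Qp j ≠ 0)).Nonempty :=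
      ⟨j₀, by simp [hQ0]⟩
    exact ⟨_, (Finset.mem_filter.mp (Finset.max'_mem _ hne)).2,
      fun j hj => Finset.le_max' _ j (by simp [hj])⟩
  obtain ⟨B, hB⟩ := eventually_atTop.mp (eval_eventually_ne hdmem)
  set n₂ := max n₁ B with hn₂
  have hn₁le : n₁ ≤ n₂ := le_max_left _ _
  have hBle : B ≤ n₂ := le_max_right _ _
  set A := (n₂ + 1) * q + 1 with hA
  have hAge : n₂ + 2 ≤ A := by
    have : n₂ + 1 ≤ (n₂ + 1) * q := Nat.le_mul_of_pos_right _ hq0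
    omega
  have hplarge : ∀ p : ℕ, p.Prime → p ∣ q → 2 * t + 1 < p := by
    intro p hp hpq
    by_contra hle
    push_neg at hle
    have h1 : p ∣ Nat.factorial (2 * t + 1) := Nat.dvd_factorial hp.pos hle
    have h2 : p ∣ Nat.gcd q (Nat.factorial (2 * t + 1)) := Nat.dvd_gcd hpq h1
    rw [hcop] at h2
    exact absurd (Nat.dvd_one.mp h2) hp.one_lt.ne'
  have hwin : ∀ j : ℕ, j < (d : ℕ) → Nat.Coprime (A + j) q := by
    intro j hj
    rw [Nat.coprime_comm]
    by_contra hnc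
    obtain ⟨p, hp, hpd⟩ := Nat.exists_prime_and_dvd hnc
    have hpq : p ∣ q := hpd.trans (Nat.gcd_dvd_left _ _)
    have hpA : p ∣ A + j := hpd.trans (Nat.gcd_dvd_right _ _)
    have hpj : p ∣ 1 + j := by
      have : A + j = (n₂ + 1) * q + (1 + j) := by omega
      rw [this] at hpA
      exact (Nat.dvd_add_right (Dvd.dvd.mul_left hpq _)).mp hpA
    have h1 : p ≤ 1 + j := Nat.le_of_dvd (by omega) hpj
    have h2 : 2 * t + 1 < p := hplarge p hp hpq
    have h3 : (d : ℕ) < 2 * t + 1 := d.isLt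
    omega
  have hHcop : ∀ m : ℕ, 0 < m → Nat.Coprime m q → H m = 0 := by
    intro m hm hc
    rw [hH]
    simp only []
    rw [hfmul m q hm hq0 hc]
    ring
  refine ⟨A, ?_⟩
  have main : ∀ m : ℕ, A ≤ m → H m = 0 := by
    intro m
    induction m using Nat.strong_induction_on with
    | _ m ih =>
    intro hAm
    by_cases hc : Nat.Coprime m q
    · exact hHcop m (by omega) hc
    · obtain ⟨p, hp, hpd⟩ := Nat.exists_prime_and_dvd hc
      have hpm : p ∣ m := hpd.trans (Nat.gcd_dvd_left _ _)
      have hpq : p ∣ q := hpd.trans (Nat.gcd_dvd_right _ _)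
      have hmge : A + (d : ℕ) ≤ m := by
        by_contra hlt
        push_neg at hlt
        have hcop2 := hwin (m - A) (by omega)
        rw [show A + (m - A) = m by omega] at hcop2
        exact hc hcop2
      set n := m - (d : ℕ) with hn
      have hnge : n₂ + 1 ≤ n := by omega
      have hrecn := hn₁ n (by omega)
      rw [Finset.sum_eq_single d ?side ?notmem] at hrecn
      case side =>
        intro j _ hjd
        by_cases hQj : Qp j = 0
        · rw [hQj]; simp
        · have hjle : j ≤ d := hdmax j hQj
          have hjlt : (j : ℕ) < (d : ℕ) := hjle.lt_of_ne hjd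
          have hz : H (n + (j : ℕ)) = 0 := ih (n + (j : ℕ)) (by omega) (by omega)
          rw [hz, mul_zero]
      case notmem =>
        intro hd'
        exact absurd (Finset.mem_univ d) hd'
      rw [show n + (d : ℕ) = m by omega] at hrecn
      rcases mul_eq_zero.mp hrecn with h | h
      · exact absurd h (hB n (by omega))
      · exact h
  intro n hn
  have hzero := main n hn
  rw [hH] at hzero
  have := sub_eq_zero.mp hzero
  rw [this, mul_comm]
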